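/- For α > 1 and centered scores z ∈ [0,1]^n with max(z) = 1, the function f(τ) = -1 + Σ_j max(z_j - τ, 0)^{1/(α-1)} is continuous and strictly decreasing on [0, 1 - n^{1-α}], and has a unique root τ* in this interval. -/

import Mathlib

open Finset

theorem entmax_f_cont_strictAnti_unique_root
    (α : ℝ) (hα : 1 < α) (n : ℕ) (hn : 1 ≤ n) (z : Fin n → ℝ)
    (hz : ∀ j, z j ∈ Set.Icc (0:ℝ) 1) (hmax : ∃ j, z j = 1)
    (f : ℝ → ℝ)
    (hf : f = fun τ => -1 + ∑ j, (max (z j - τ) 0) ^ (1/(α-1)) ) :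
    ContinuousOn f (Set.Icc (0:ℝ) (1 - (n:ℝ) ^ (1-α))) ∧
    StrictAntiOn f (Set.Icc (0:ℝ) (1 - (n:ℝ) ^ (1-α))) ∧
    ∃! τ, τ ∈ Set.Icc (0:ℝ) (1 - (n:ℝ) ^ (1-α)) ∧ f τ = 0 := by
  obtain ⟨j0, hj0⟩ := hmax
  have hα1 : (0:ℝ) < α - 1 := by linarith
  have hp : 0 < 1/(α-1) := by positivity
  set p : ℝ := 1/(α-1) with hp_def
  set b : ℝ := 1 - (n:ℝ) ^ (1-α) with hb_def
  have hnpos : (0:ℝ) < n := by exact_mod_cast hn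
  have hpow_pos : (0:ℝ) < (n:ℝ) ^ (1-α) := Real.rpow_pos_of_pos hnpos _
  have hpow_le : (n:ℝ) ^ (1-α) ≤ 1 :=
    Real.rpow_le_one_of_one_le_of_nonpos (by exact_mod_cast hn) (by linarith)
  have hb0 : 0 ≤ b := by rw [hb_def]; linarith
  have hb1 : b < 1 := by rw [hb_def]; linarith
  have hcont : Continuous f := by
    rw [hf]
    exact continuous_const.add (continuous_finset_sum _ fun j _ =>
      ((continuous_const.sub continuous_id).max continuous_const).rpow_const
        fun x => Or.inr hp.le)
  have hanti : StrictAntiOn f (Set.Icc 0 b) := by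
    intro x hx y hy hxy
    rw [hf]
    dsimp only
    have hsum : ∑ j, (max (z j - y) 0) ^ p < ∑ j, (max (z j - x) 0) ^ p := by
      apply Finset.sum_lt_sum
      · intro j _
        exact Real.rpow_le_rpow (le_max_right _ _)
          (max_le_max (by linarith) le_rfl) hp.le
      · refine ⟨j0, Finset.mem_univ _, ?_⟩
        have hy1 : y ≤ b := hy.2
        have hx0 : 0 ≤ x := hx.1
        rw [hj0, max_eq_left (by linarith), max_eq_left (by linarith)]
        exact Real.rpow_lt_rpow (by linarith) (by linarith) hp
    linarith
  have hf0 : 0 ≤ f 0 := by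
    rw [hf]
    dsimp only
    have h1 : (1:ℝ) ≤ ∑ j, (max (z j - 0) 0) ^ p := by
      have := Finset.single_le_sum
        (f := fun j => (max (z j - 0) 0) ^ p)
        (fun j _ => Real.rpow_nonneg (le_max_right _ _) _) (Finset.mem_univ j0)
      simp only [hj0] at this
      simpa using this
    linarith
  have hfb : f b ≤ 0 := by
    rw [hf]
    dsimp only
    have hterm : ∀ j, (max (z j - b) 0) ^ p ≤ ((n:ℝ)^(1-α)) ^ p := by
      intro j
      refine Real.rpow_le_rpow (le_max_right _ _) ?_ hp.le
      have := (hz j).2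
      exact max_le (by rw [hb_def]; linarith) hpow_pos.le
    have hsum : ∑ j, (max (z j - b) 0) ^ p ≤ (n:ℝ) * ((n:ℝ)^(1-α)) ^ p := by
      calc ∑ j, (max (z j - b) 0) ^ p ≤ ∑ _j : Fin n, ((n:ℝ)^(1-α)) ^ p :=
            Finset.sum_le_sum fun j _ => hterm j
        _ = (n:ℝ) * ((n:ℝ)^(1-α)) ^ p := by
            simp [Finset.sum_const, nsmul_eq_mul]
    have hcalc : (n:ℝ) * ((n:ℝ)^(1-α)) ^ p = 1 := by
      rw [← Real.rpow_mul hnpos.le]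
      have h2 : (1-α) * p = -1 := by
        rw [hp_def]; field_simp; ring
      rw [h2, Real.rpow_neg_one]
      field_simp
    linarith [hsum, hcalc]
  have hivt := intermediate_value_Icc' hb0 hcont.continuousOn
  have h0mem : (0:ℝ) ∈ Set.Icc (f b) (f 0) := ⟨hfb, hf0⟩
  obtain ⟨τ, hτ, hfτ⟩ := hivt h0mem
  refine ⟨hcont.continuousOn, hanti, τ, ⟨hτ, hfτ⟩, ?_⟩
  rintro τ' ⟨hτ', hfτ'⟩
  exact hanti.injOn hτ' hτ (by rw [hfτ', hfτ])
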